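/- Let D be a domain in ℝ^N, N ≥ 2, and let u : D → [-∞, +∞) be such that there exist x₁, x₂ ∈ D with u(x₁) > 0 > u(x₂). Then u is harmonic if and only if both u and -u are quasinearly subharmonic n.s. (possibly with different constants K₁, K₂). -/

import Mathlib

open MeasureTheory Metric
open scoped ENNReal

noncomputable section

/-- `ℝ^N` as Euclidean space. -/
abbrev Euc (N : ℕ) := EuclideanSpace ℝ (Fin N)

/-- `ν_N`: the volume of the unit ball in `ℝ^N`. -/
noncomputable def unitBallVol (N : ℕ) : ℝ := (volume (ball (0 : Euc N) 1)).toReal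

/-- Positive part of an extended real, valued in `ℝ≥0∞`. -/
noncomputable def epos (x : EReal) : ℝ≥0∞ := if x = ⊤ then ⊤ else ENNReal.ofReal x.toReal

/-- The extended-real valued Lebesgue integral of `u` over `s`
(well defined whenever the positive part is integrable). -/
noncomputable def esetInt {N : ℕ} (u : Euc N → EReal) (s : Set (Euc N)) : EReal :=
  ((∫⁻ y in s, epos (u y)) : ℝ≥0∞) - ((∫⁻ y in s, epos (-(u y))) : ℝ≥0∞)

/-- The generalized sub-mean-value inequality
`u(x) ≤ K/(ν_N r^N) ∫_{B(x,r)} u dm_N` over all closed balls contained in `D`. -/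
def SubMeanIneq {N : ℕ} (K : ℝ) (D : Set (Euc N)) (u : Euc N → EReal) : Prop :=
  ∀ x r, 0 < r → closedBall x r ⊆ D →
    u x ≤ ((K / (unitBallVol N * r ^ N) : ℝ) : EReal) * esetInt u (ball x r)

/-- `u` is `K`-quasinearly subharmonic n.s. (in the narrow sense) on `D`:
`u` is measurable, `u⁺ ∈ L¹_loc(D)`, `u < +∞` and the sub-mean-value
inequality with constant `K` holds on all closed balls in `D`. -/
def QNSns {N : ℕ} (K : ℝ) (D : Set (Euc N)) (u : Euc N → EReal) : Prop :=
  1 ≤ K ∧ AEMeasurable u (volume.restrict D) ∧ (∀ x ∈ D, u x < ⊤) ∧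
  LocallyIntegrableOn (fun y => ((u y) ⊔ 0).toReal) D volume ∧
  SubMeanIneq K D u

/-- The family of inequalities (for every `M ≥ 0`, applied to `u_M = max (u, -M) + M`)
defining `K`-quasinearly subharmonic functions. -/
def QNSIneqFull {N : ℕ} (K : ℝ) (D : Set (Euc N)) (u : Euc N → EReal) : Prop :=
  ∀ M : ℝ, 0 ≤ M → ∀ x r, 0 < r → closedBall x r ⊆ D →
    (u x ⊔ ((-M : ℝ) : EReal)) + (M : EReal) ≤
      ((K / (unitBallVol N * r ^ N) : ℝ) : EReal) *
        ((∫⁻ y in ball x r, epos ((u y ⊔ ((-M : ℝ) : EReal)) + (M : EReal))) : ℝ≥0∞)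

/-- `u` is `K`-quasinearly subharmonic on `D`. -/
def QNSfull {N : ℕ} (K : ℝ) (D : Set (Euc N)) (u : Euc N → EReal) : Prop :=
  1 ≤ K ∧ AEMeasurable u (volume.restrict D) ∧ (∀ x ∈ D, u x < ⊤) ∧
  LocallyIntegrableOn (fun y => ((u y) ⊔ 0).toReal) D volume ∧
  QNSIneqFull K D u

/-- `u ∈ L¹_loc(D)` for an extended-real valued `u`. -/
def LocIntE {N : ℕ} (u : Euc N → EReal) (D : Set (Euc N)) : Prop :=
  ∀ k, k ⊆ D → IsCompact k → (∫⁻ y in k, epos (u y) + epos (-(u y))) < ⊤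

/-- The sub-mean-value inequality for real-valued functions. -/
def SubMeanIneqR {N : ℕ} (K : ℝ) (D : Set (Euc N)) (u : Euc N → ℝ) : Prop :=
  ∀ x r, 0 < r → closedBall x r ⊆ D →
    u x ≤ (K / (unitBallVol N * r ^ N)) * ∫ y in ball x r, u y

/-- The quasinearly subharmonicity inequalities (for every `M ≥ 0`,
applied to `u_M = max (u, -M) + M`) for real-valued functions. -/
def QNSIneqFullR {N : ℕ} (K : ℝ) (D : Set (Euc N)) (u : Euc N → ℝ) : Prop :=
  ∀ M : ℝ, 0 ≤ M → ∀ x r, 0 < r → closedBall x r ⊆ D →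
    max (u x) (-M) + M ≤
      (K / (unitBallVol N * r ^ N)) * ∫ y in ball x r, (max (u y) (-M) + M)

/-- `u : D → [-∞, +∞)` is harmonic on `D`: it is finite (real-valued) on `D`,
continuous on `D`, and satisfies the mean value equality on all closed balls in `D`. -/
def IsHarmonicOn {N : ℕ} (D : Set (Euc N)) (u : Euc N → EReal) : Prop :=
  (∀ x ∈ D, u x ≠ ⊥ ∧ u x ≠ ⊤) ∧ ContinuousOn (fun x => (u x).toReal) D ∧
  ∀ x r, 0 < r → closedBall x r ⊆ D →
    (u x).toReal = (1 / (unitBallVol N * r ^ N)) * ∫ y in ball x r, (u y).toReal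

end

section Aux

open Filter Topology

variable {N : ℕ}

lemma unitBallVol_pos (hN : 1 ≤ N) : 0 < unitBallVol N := by
  haveI : Inhabited (Fin N) := ⟨⟨0, hN⟩⟩
  exact ENNReal.toReal_pos (measure_ball_pos _ _ one_pos).ne' measure_ball_lt_top.ne

lemma volume_ball_eq (hN : 1 ≤ N) (x : Euc N) {r : ℝ} (hr : 0 ≤ r) :
    (volume (ball x r)).toReal = unitBallVol N * r ^ N := by
  haveI : Inhabited (Fin N) := ⟨⟨0, hN⟩⟩
  haveI : Nontrivial (Euc N) := inferInstance
  rw [MeasureTheory.Measure.addHaar_ball volume x hr, finrank_euclideanSpace_fin,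
    ENNReal.toReal_mul, ENNReal.toReal_ofReal (pow_nonneg hr N), unitBallVol, mul_comm]

lemma toReal_sup_zero (a : EReal) : (a ⊔ 0).toReal = max a.toReal 0 := by
  induction a using EReal.rec with
  | bot => simp
  | coe b =>
    have : ((b : EReal) ⊔ ((0:ℝ) : EReal)) = ((max b 0 : ℝ) : EReal) :=
      (EReal.coe_strictMono.monotone.map_max).symm
    simp [← EReal.coe_zero, this]
  | top => simp

lemma toReal_decomp (a : EReal) : a.toReal = (a ⊔ 0).toReal - ((-a) ⊔ 0).toReal := by
  rw [toReal_sup_zero, toReal_sup_zero, EReal.toReal_neg_eq]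
  rcases le_total a.toReal 0 with h | h
  · rw [max_eq_right h, max_eq_left (by linarith)]; ring
  · rw [max_eq_left h, max_eq_right (by linarith)]; ring

lemma esetInt_eq {u : Euc N → EReal} {s : Set (Euc N)} (hs : MeasurableSet s)
    (hfin : ∀ y ∈ s, u y ≠ ⊤ ∧ u y ≠ ⊥)
    (hint : IntegrableOn (fun y => (u y).toReal) s) :
    esetInt u s = ((∫ y in s, (u y).toReal : ℝ) : EReal) := by
  set f : Euc N → ℝ := fun y => (u y).toReal with hf
  have h1 : ∫⁻ y in s, epos (u y) = ∫⁻ y in s, ENNReal.ofReal (f y) :=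
    setLIntegral_congr_fun hs (fun y hy => by
      simp [epos, (hfin y hy).1, hf])
  have h2 : ∫⁻ y in s, epos (-(u y)) = ∫⁻ y in s, ENNReal.ofReal (-(f y)) :=
    setLIntegral_congr_fun hs (fun y hy => by
      have : -(u y) ≠ ⊤ := by simp [EReal.neg_eq_top_iff, (hfin y hy).2]
      simp [epos, this, hf, EReal.toReal_neg_eq])
  have hbnd : ∀ g : Euc N → ℝ, (∀ y, ENNReal.ofReal (g y) ≤ (‖f y‖₊ : ℝ≥0∞)) →
      (∫⁻ y in s, ENNReal.ofReal (g y)) < ⊤ := fun g hg =>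
    lt_of_le_of_lt (lintegral_mono hg) hint.2
  have hA : (∫⁻ y in s, ENNReal.ofReal (f y)) ≠ ⊤ :=
    (hbnd f (fun y => by
      rw [← enorm_eq_nnnorm, Real.enorm_eq_ofReal_abs]
      exact ENNReal.ofReal_le_ofReal (le_abs_self _))).ne
  have hB : (∫⁻ y in s, ENNReal.ofReal (-(f y))) ≠ ⊤ :=
    (hbnd _ (fun y => by
      rw [← enorm_eq_nnnorm, Real.enorm_eq_ofReal_abs]
      exact ENNReal.ofReal_le_ofReal (neg_le_abs _))).ne
  have hi := integral_eq_lintegral_pos_part_sub_lintegral_neg_part hint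
  have key : ∀ A : ℝ≥0∞, A ≠ ⊤ → (A : EReal) = ((A.toReal : ℝ) : EReal) := fun A hA => by
    rw [← EReal.toReal_coe_ennreal]
    exact (EReal.coe_toReal (by simpa using hA) (by simp)).symm
  rw [esetInt, h1, h2, hi, key _ hA, key _ hB, ← EReal.coe_sub]

lemma tendsto_ballIntegral (hN : 1 ≤ N) {g : Euc N → ℝ} {r δ : ℝ} (hδ : 0 < δ) {x₀ : Euc N}
    (hint : IntegrableOn g (closedBall x₀ (r + δ))) :
    Filter.Tendsto (fun x => ∫ y in ball x r, g y) (𝓝 x₀)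
      (𝓝 (∫ y in ball x₀ r, g y)) := by
  set S := closedBall x₀ (r + δ) with hS
  have hsub : ∀ x ∈ ball x₀ δ, ball x r ⊆ S := by
    intro x hx y hy
    have h0 : dist y x₀ ≤ dist y x + dist x x₀ := dist_triangle _ _ _
    simp only [hS, mem_closedBall]
    have h1 : dist y x < r := mem_ball.1 hy
    have h2 : dist x x₀ < δ := mem_ball.1 hx
    linarith
  have heq : ∀ x ∈ ball x₀ δ,
      ∫ y in ball x r, g y = ∫ y in S, (ball x r).indicator g y := by
    intro x hx
    rw [setIntegral_indicator measurableSet_ball,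
      Set.inter_eq_self_of_subset_right (hsub x hx)]
  have hx₀ : x₀ ∈ ball x₀ δ := mem_ball_self hδ
  have hmain : Filter.Tendsto (fun x => ∫ y in S, (ball x r).indicator g y) (𝓝 x₀)
      (𝓝 (∫ y in S, (ball x₀ r).indicator g y)) := by
    apply tendsto_integral_filter_of_dominated_convergence (fun y => |g y|)
    · exact Filter.Eventually.of_forall fun x =>
        hint.1.indicator measurableSet_ball
    · refine Filter.Eventually.of_forall fun x => Filter.Eventually.of_forall fun y => ?_
      by_cases hy : y ∈ ball x r
      · simp [Set.indicator_of_mem hy, Real.norm_eq_abs, le_refl]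
      · simp [Set.indicator_of_notMem hy, abs_nonneg]
    · exact hint.abs
    · have hsph : (volume.restrict S) (sphere x₀ r) = 0 := by
        refine le_antisymm (le_trans (Measure.restrict_le_self (sphere x₀ r)) ?_) zero_le
        haveI : Inhabited (Fin N) := ⟨⟨0, hN⟩⟩
        haveI : Nontrivial (Euc N) := inferInstance
        simp [Measure.addHaar_sphere]
      filter_upwards [measure_eq_zero_iff_ae_notMem.1 hsph] with y hy
      rcases lt_or_gt_of_ne (fun h : dist y x₀ = r => hy (mem_sphere.2 h)) with h | h
      · have hev : ∀ᶠ x in 𝓝 x₀, y ∈ ball x r := by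
          filter_upwards [ball_mem_nhds x₀ (sub_pos.2 h)] with x hx
          have h0 : dist y x ≤ dist y x₀ + dist x₀ x := dist_triangle _ _ _
          have h2 : dist x x₀ < r - dist y x₀ := mem_ball.1 hx
          rw [dist_comm x₀ x] at h0
          exact mem_ball.2 (by linarith)
        have hcg : (fun x => (ball x r).indicator g y) =ᶠ[𝓝 x₀] fun _ => g y := by
          filter_upwards [hev] with x hx using Set.indicator_of_mem hx g
        rw [Set.indicator_of_mem (mem_ball.2 h) g]
        exact Filter.Tendsto.congr' hcg.symm tendsto_const_nhds
      · have hev : ∀ᶠ x in 𝓝 x₀, y ∉ ball x r := by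
          filter_upwards [ball_mem_nhds x₀ (sub_pos.2 h)] with x hx hy'
          have h1 : dist y x < r := mem_ball.1 hy'
          have h2 : dist x x₀ < dist y x₀ - r := mem_ball.1 hx
          have h0 : dist y x₀ ≤ dist y x + dist x x₀ := dist_triangle _ _ _
          linarith
        have hcg : (fun x => (ball x r).indicator g y) =ᶠ[𝓝 x₀] fun _ => (0:ℝ) := by
          filter_upwards [hev] with x hx using Set.indicator_of_notMem hx g
        rw [Set.indicator_of_notMem (fun h' => absurd (mem_ball.1 h') (not_lt.2 h.le)) g]
        exact Filter.Tendsto.congr' hcg.symm tendsto_const_nhds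
  rw [heq x₀ hx₀]
  refine hmain.congr' ?_
  filter_upwards [ball_mem_nhds x₀ hδ] with x hx using (heq x hx).symm

lemma isHarmonicOn_neg {D : Set (Euc N)} {u : Euc N → EReal} (h : IsHarmonicOn D u) :
    IsHarmonicOn D (fun x => -(u x)) := by
  obtain ⟨hfin, hcont, hmvp⟩ := h
  refine ⟨fun x hx => ⟨by simp [EReal.neg_eq_bot_iff, (hfin x hx).2],
      by simp [EReal.neg_eq_top_iff, (hfin x hx).1]⟩, ?_, ?_⟩
  · have : (fun x => ((fun x => -(u x)) x).toReal) = fun x => -((u x).toReal) := by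
      funext x; exact EReal.toReal_neg_eq
    rw [this]; exact hcont.neg
  · intro x r hr hsub
    have h1 := hmvp x r hr hsub
    simp only [EReal.toReal_neg_eq]
    rw [integral_neg] at *
    · skip
      rw [h1]; ring

lemma qnsns_of_harmonic (hN : 1 ≤ N) {D : Set (Euc N)} (hDopen : IsOpen D)
    {u : Euc N → EReal} (h : IsHarmonicOn D u) : QNSns 1 D u := by
  obtain ⟨hfin, hcont, hmvp⟩ := h
  refine ⟨le_refl 1, ?_, fun x hx => lt_top_iff_ne_top.2 (hfin x hx).2, ?_, ?_⟩
  · have hg : AEMeasurable (fun x => (u x).toReal) (volume.restrict D) :=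
      hcont.aemeasurable hDopen.measurableSet
    refine hg.coe_real_ereal.congr ?_
    refine ae_restrict_of_forall_mem hDopen.measurableSet fun x hx => ?_
    exact EReal.coe_toReal (hfin x hx).2 (hfin x hx).1
  · have heq : (fun y => ((u y) ⊔ 0).toReal) = fun y => max (u y).toReal 0 := by
      funext y; exact toReal_sup_zero (u y)
    rw [heq]
    exact ((continuous_id.max continuous_const).comp_continuousOn hcont).locallyIntegrableOn hDopen.measurableSet
  · intro x r hr hsub
    have hxD : x ∈ D := hsub (mem_closedBall_self hr.le)
    have hball : ball x r ⊆ D := ball_subset_closedBall.trans hsub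
    have hint : IntegrableOn (fun y => (u y).toReal) (ball x r) :=
      ((hcont.mono hsub).integrableOn_compact (isCompact_closedBall x r)).mono_set
        ball_subset_closedBall
    rw [esetInt_eq measurableSet_ball
        (fun y hy => ⟨(hfin y (hball hy)).2, (hfin y (hball hy)).1⟩) hint,
      ← EReal.coe_toReal (hfin x hxD).2 (hfin x hxD).1, ← EReal.coe_mul]
    exact EReal.coe_le_coe_iff.2 (le_of_eq (hmvp x r hr hsub))

end Aux

/-- if `u` takes a positive and a negative value on `D`, then
`u` is harmonic iff both `u` and `-u` are quasinearly subharmonic n.s.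
(possibly with different constants). -/
theorem harmonic_iff_qnsns_of_signChange {N : ℕ} (hN : 2 ≤ N)
    (D : Set (Euc N)) (hDopen : IsOpen D) (hDconn : IsConnected D)
    (u : Euc N → EReal)
    (x₁ x₂ : Euc N) (hx₁ : x₁ ∈ D) (hx₂ : x₂ ∈ D)
    (hpos : 0 < u x₁) (hneg : u x₂ < 0) :
    IsHarmonicOn D u ↔
      (∃ K₁ : ℝ, QNSns K₁ D u) ∧ (∃ K₂ : ℝ, QNSns K₂ D (fun x => -(u x))) := by
  have hN1 : 1 ≤ N := le_trans one_le_two hN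
  constructor
  · intro h
    exact ⟨⟨1, qnsns_of_harmonic hN1 hDopen h⟩,
      ⟨1, qnsns_of_harmonic hN1 hDopen (isHarmonicOn_neg h)⟩⟩
  · rintro ⟨⟨K₁, hK₁, hmeas₁, htop₁, hloc₁, hsm₁⟩, ⟨K₂, hK₂, hmeas₂, htop₂, hloc₂, hsm₂⟩⟩
    have hK₁pos : (0:ℝ) < K₁ := lt_of_lt_of_le one_pos hK₁
    have hK₂pos : (0:ℝ) < K₂ := lt_of_lt_of_le one_pos hK₂
    have hfin : ∀ x ∈ D, u x ≠ ⊤ ∧ u x ≠ ⊥ := by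
      intro x hx
      refine ⟨(htop₁ x hx).ne, fun hbot => ?_⟩
      have h2 := htop₂ x hx
      simp only [hbot] at h2
      simp at h2
    set g : Euc N → ℝ := fun y => (u y).toReal with hgdef
    have hcoe : ∀ x ∈ D, ((g x : ℝ) : EReal) = u x := fun x hx =>
      EReal.coe_toReal (hfin x hx).1 (hfin x hx).2
    have hgint : ∀ k, k ⊆ D → IsCompact k → IntegrableOn g k volume := by
      intro k hk hkc
      have h1 := hloc₁.integrableOn_compact_subset hk hkc
      have h2 := hloc₂.integrableOn_compact_subset hk hkc
      have hdec : g = fun y => ((u y ⊔ 0).toReal - ((-(u y)) ⊔ 0).toReal) :=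
        funext fun y => toReal_decomp (u y)
      rw [hdec]
      exact h1.sub h2
    have hcpos : ∀ r : ℝ, 0 < r → 0 < unitBallVol N * r ^ N := fun r hr =>
      mul_pos (unitBallVol_pos hN1) (pow_pos hr N)
    have key : ∀ x r, 0 < r → closedBall x r ⊆ D →
        K₂ * (∫ y in ball x r, g y) ≤ g x * (unitBallVol N * r ^ N) ∧
        g x * (unitBallVol N * r ^ N) ≤ K₁ * (∫ y in ball x r, g y) := by
      intro x r hr hsub
      have hxD : x ∈ D := hsub (mem_closedBall_self hr.le)
      have hball : ball x r ⊆ D := ball_subset_closedBall.trans hsub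
      have hc := hcpos r hr
      have hint : IntegrableOn g (ball x r) :=
        (hgint _ hsub (isCompact_closedBall x r)).mono_set ball_subset_closedBall
      have he1 : esetInt u (ball x r) = ((∫ y in ball x r, g y : ℝ) : EReal) :=
        esetInt_eq measurableSet_ball (fun y hy => hfin y (hball hy)) hint
      have hneg : (fun y => (-(u y)).toReal) = fun y => -(g y) :=
        funext fun y => EReal.toReal_neg_eq
      have he2 : esetInt (fun y => -(u y)) (ball x r) =
          ((-(∫ y in ball x r, g y) : ℝ) : EReal) := by
        have h2int : IntegrableOn (fun y => (-(u y)).toReal) (ball x r) := by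
          rw [hneg]; exact hint.neg
        rw [esetInt_eq measurableSet_ball (fun y hy =>
          ⟨by simp [EReal.neg_eq_top_iff, (hfin y (hball hy)).2],
           by simp [EReal.neg_eq_bot_iff, (hfin y (hball hy)).1]⟩) h2int]
        norm_cast
        calc ∫ y in ball x r, (-(u y)).toReal = ∫ y in ball x r, -(g y) := by rw [hneg]
          _ = -∫ y in ball x r, g y := integral_neg _
      have h1 := hsm₁ x r hr hsub
      rw [he1, ← hcoe x hxD, ← EReal.coe_mul] at h1
      have h1' : g x ≤ K₁ / (unitBallVol N * r ^ N) * ∫ y in ball x r, g y :=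
        EReal.coe_le_coe_iff.1 h1
      have h2 := hsm₂ x r hr hsub
      simp only at h2
      rw [he2, ← hcoe x hxD, ← EReal.coe_neg, ← EReal.coe_mul] at h2
      have h2' : -(g x) ≤ K₂ / (unitBallVol N * r ^ N) * -(∫ y in ball x r, g y) :=
        EReal.coe_le_coe_iff.1 h2
      rw [div_mul_eq_mul_div, le_div_iff₀ hc] at h1' h2'
      constructor
      · nlinarith
      · exact h1'
    obtain ⟨ε₁, hε₁, hb₁⟩ := Metric.isOpen_iff.1 hDopen x₁ hx₁
    obtain ⟨ε₂, hε₂, hb₂⟩ := Metric.isOpen_iff.1 hDopen x₂ hx₂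
    have hcb₁ : closedBall x₁ (ε₁/2) ⊆ D := (closedBall_subset_ball (by linarith)).trans hb₁
    have hcb₂ : closedBall x₂ (ε₂/2) ⊆ D := (closedBall_subset_ball (by linarith)).trans hb₂
    have hgx₁ : 0 < g x₁ := by
      rw [← hcoe x₁ hx₁, ← EReal.coe_zero] at hpos
      exact EReal.coe_lt_coe_iff.1 hpos
    have hgx₂ : g x₂ < 0 := by
      rw [← hcoe x₂ hx₂, ← EReal.coe_zero] at hneg
      exact EReal.coe_lt_coe_iff.1 hneg
    have hk₁ := key x₁ (ε₁/2) (by linarith) hcb₁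
    have hk₂ := key x₂ (ε₂/2) (by linarith) hcb₂
    have hc₁ := hcpos (ε₁/2) (by linarith)
    have hc₂ := hcpos (ε₂/2) (by linarith)
    have hI₁ : 0 < ∫ y in ball x₁ (ε₁/2), g y := by nlinarith [hk₁.2]
    have hI₂ : (∫ y in ball x₂ (ε₂/2), g y) < 0 := by nlinarith [hk₂.1]
    have hKle : K₂ ≤ K₁ := le_of_mul_le_mul_right (hk₁.1.trans hk₁.2) hI₁
    have hKge : K₁ ≤ K₂ := by
      by_contra hlt
      push_neg at hlt
      exact absurd (hk₂.1.trans hk₂.2) (not_le.2 (mul_lt_mul_of_neg_right hlt hI₂))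
    have hKeq : K₂ = K₁ := le_antisymm hKle hKge
    have heqn : ∀ x r, 0 < r → closedBall x r ⊆ D →
        g x * (unitBallVol N * r ^ N) = K₁ * ∫ y in ball x r, g y := by
      intro x r hr hsub
      obtain ⟨ha, hb⟩ := key x r hr hsub
      rw [hKeq] at ha
      linarith
    have hgcont : ∀ x₀ ∈ D, ContinuousAt g x₀ := by
      intro x₀ hx₀
      obtain ⟨ε, hε, hb⟩ := Metric.isOpen_iff.1 hDopen x₀ hx₀
      have hδ : (0:ℝ) < ε/4 := by linarith
      have hcbD : closedBall x₀ (ε/4 + ε/4) ⊆ D :=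
        (closedBall_subset_ball (by linarith)).trans hb
      have hint : IntegrableOn g (closedBall x₀ (ε/4 + ε/4)) :=
        hgint _ hcbD (isCompact_closedBall _ _)
      have htend := ((tendsto_ballIntegral hN1 hδ hint).const_mul K₁).div_const
        (unitBallVol N * (ε/4) ^ N)
      have hev : (fun x => K₁ * (∫ y in ball x (ε/4), g y) / (unitBallVol N * (ε/4) ^ N))
          =ᶠ[nhds x₀] g := by
        filter_upwards [ball_mem_nhds x₀ hδ] with x hx
        refine Eq.symm ?_
        have hsubx : closedBall x (ε/4) ⊆ D := by
          refine Set.Subset.trans ?_ hcbD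
          intro y hy
          have h1 : dist y x ≤ ε/4 := mem_closedBall.1 hy
          have h2 : dist x x₀ < ε/4 := mem_ball.1 hx
          have h3 : dist y x₀ ≤ dist y x + dist x x₀ := dist_triangle _ _ _
          exact mem_closedBall.2 (by linarith)
        rw [eq_div_iff (hcpos _ hδ).ne']
        exact heqn x (ε/4) hδ hsubx
      have hval : g x₀ = K₁ * (∫ y in ball x₀ (ε/4), g y) / (unitBallVol N * (ε/4) ^ N) := by
        rw [eq_div_iff (hcpos _ hδ).ne']
        exact heqn x₀ (ε/4) hδ ((closedBall_subset_ball (by linarith)).trans hb)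
      rw [ContinuousAt, hval]
      exact htend.congr' hev
    have hK1 : K₁ = 1 := by
      have habs : ∀ ε > (0:ℝ), |g x₁ / K₁ - g x₁| ≤ ε := by
        intro ε hε
        obtain ⟨δ', hδ', hδball⟩ := Metric.continuousAt_iff.1 (hgcont x₁ hx₁) ε hε
        set r : ℝ := min (δ'/2) (ε₁/2) with hrdef
        have hr : 0 < r := lt_min (by linarith) (by linarith)
        have hsub : closedBall x₁ r ⊆ D :=
          (closedBall_subset_closedBall (min_le_right _ _)).trans hcb₁
        have hc := hcpos r hr
        have hB : IntegrableOn g (ball x₁ r) :=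
          (hgint _ hsub (isCompact_closedBall _ _)).mono_set ball_subset_closedBall
        have hvol : (volume (ball x₁ r)).toReal = unitBallVol N * r ^ N :=
          volume_ball_eq hN1 x₁ hr.le
        have hIsub : ∫ y in ball x₁ r, (g y - g x₁) =
            (∫ y in ball x₁ r, g y) - (unitBallVol N * r ^ N) * g x₁ := by
          rw [integral_sub hB (integrableOn_const measure_ball_lt_top.ne),
            setIntegral_const, smul_eq_mul, measureReal_def, hvol]
        have hbound : |∫ y in ball x₁ r, (g y - g x₁)| ≤ ε * (unitBallVol N * r ^ N) := by
          rw [← hvol, ← Real.norm_eq_abs]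
          refine norm_setIntegral_le_of_norm_le_const measure_ball_lt_top
            fun y hy => ?_
          have hdy : dist y x₁ < δ' := by
            have h1 : dist y x₁ < r := mem_ball.1 hy
            have h2 : r ≤ δ'/2 := min_le_left _ _
            linarith
          have := hδball hdy
          rw [Real.dist_eq] at this
          rw [Real.norm_eq_abs]
          exact this.le
        have hid := heqn x₁ r hr hsub
        have hdiv : g x₁ / K₁ = (∫ y in ball x₁ r, g y) / (unitBallVol N * r ^ N) := by
          rw [div_eq_div_iff hK₁pos.ne' hc.ne']
          linarith
        have hrw : (∫ y in ball x₁ r, g y) / (unitBallVol N * r ^ N) - g x₁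
            = ((∫ y in ball x₁ r, g y) - (unitBallVol N * r ^ N) * g x₁)
              / (unitBallVol N * r ^ N) := by
          rw [sub_div, mul_div_cancel_left₀ _ hc.ne']
        rw [hdiv, hrw, abs_div, abs_of_pos hc, div_le_iff₀ hc, ← hIsub]
        exact hbound
      have hzero : g x₁ / K₁ - g x₁ = 0 := by
        by_contra hne
        have hpos' : 0 < |g x₁ / K₁ - g x₁| := abs_pos.2 hne
        have := habs (|g x₁ / K₁ - g x₁| / 2) (by linarith)
        linarith
      have : g x₁ / K₁ = g x₁ := by linarith
      rw [div_eq_iff hK₁pos.ne'] at this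
      have := mul_left_cancel₀ hgx₁.ne' (by linarith : g x₁ * K₁ = g x₁ * 1)
      linarith
    refine ⟨fun x hx => ⟨(hfin x hx).2, (hfin x hx).1⟩,
      fun x hx => (hgcont x hx).continuousWithinAt, fun x r hr hsub => ?_⟩
    have hth := heqn x r hr hsub
    rw [hK1, one_mul] at hth
    have hc := hcpos r hr
    show g x = 1 / (unitBallVol N * r ^ N) * ∫ y in ball x r, g y
    rw [← hth]
    rw [one_div_mul_eq_div, mul_div_cancel_right₀ _ hc.ne']
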